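/- Let V be a vector space over ℤ/2ℤ. Let S³(V) be the degree-3 component of the symmetric algebra and S'³(V) = T³(V)/⟨A⊗B⊗C − B⊗C⊗A⟩ the quotient of the degree-3 tensor power by cyclic permutations. Define τ : S³(V) → S'³(V) by A∙B∙C ↦ A⊙B⊙C + B⊙A⊙C and ρ : S'³(V) → S³(V) by A⊙B⊙C ↦ A∙B∙C. Then τ and ρ are well-defined linear maps, ρ is surjective, and ker ρ = im τ; i.e., the sequence S³(V) → S'³(V) → S³(V) → 0 is exact. -/

import Mathlib

open TensorProduct

/-- The degree-3 tensor power `T³(V) = V ⊗ V ⊗ V` over `ℤ/2ℤ`. -/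
abbrev T3 (V : Type*) [AddCommGroup V] [Module (ZMod 2) V] :=
  V ⊗[ZMod 2] (V ⊗[ZMod 2] V)

/-- The submodule of relations for cyclic permutations: generated by
`a⊗b⊗c − b⊗c⊗a`.  The quotient is `S'³(V)`. -/
def cycRel (V : Type*) [AddCommGroup V] [Module (ZMod 2) V] : Submodule (ZMod 2) (T3 V) :=
  Submodule.span (ZMod 2)
    {x | ∃ a b c : V, x = a ⊗ₜ[ZMod 2] (b ⊗ₜ[ZMod 2] c) - b ⊗ₜ[ZMod 2] (c ⊗ₜ[ZMod 2] a)}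

/-- The submodule of relations for all permutations (cyclic ones together with the
transposition `a⊗b⊗c − b⊗a⊗c`).  The quotient is `S³(V)`. -/
def symRel (V : Type*) [AddCommGroup V] [Module (ZMod 2) V] : Submodule (ZMod 2) (T3 V) :=
  cycRel V ⊔ Submodule.span (ZMod 2)
    {x | ∃ a b c : V, x = a ⊗ₜ[ZMod 2] (b ⊗ₜ[ZMod 2] c) - b ⊗ₜ[ZMod 2] (a ⊗ₜ[ZMod 2] c)}

/-- `S³(V)`, the degree-3 component of the symmetric algebra. -/
abbrev S3 (V : Type*) [AddCommGroup V] [Module (ZMod 2) V] := T3 V ⧸ symRel V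

/-- `S'³(V) = T³(V)/⟨A⊗B⊗C − B⊗C⊗A⟩`. -/
abbrev S3' (V : Type*) [AddCommGroup V] [Module (ZMod 2) V] := T3 V ⧸ cycRel V

/-- The canonical projection `T³(V) → S³(V)`, `a⊗b⊗c ↦ a∙b∙c`. -/
def mkS (V : Type*) [AddCommGroup V] [Module (ZMod 2) V] : T3 V →ₗ[ZMod 2] S3 V :=
  (symRel V).mkQ

/-- The canonical projection `T³(V) → S'³(V)`, `a⊗b⊗c ↦ a⊙b⊙c`. -/
def mkS' (V : Type*) [AddCommGroup V] [Module (ZMod 2) V] : T3 V →ₗ[ZMod 2] S3' V :=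
  (cycRel V).mkQ

section Aux

lemma char2_add_self {M : Type*} [AddCommGroup M] [Module (ZMod 2) M] (x : M) :
    x + x = 0 := by
  rw [← two_smul (ZMod 2) x]
  have h : (2 : ZMod 2) = 0 := rfl
  rw [h, zero_smul]

lemma char2_neg {M : Type*} [AddCommGroup M] [Module (ZMod 2) M] (x : M) :
    -x = x := by
  rw [neg_eq_iff_add_eq_zero]; exact char2_add_self x

variable (V : Type*) [AddCommGroup V] [Module (ZMod 2) V]

/-- swap of the first two factors: `a⊗(b⊗c) ↦ b⊗(a⊗c)`. -/
noncomputable def swapMap : T3 V →ₗ[ZMod 2] T3 V :=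
  (TensorProduct.leftComm (ZMod 2) V V V).toLinearMap

@[simp] lemma swapMap_tmul (a b c : V) :
    swapMap V (a ⊗ₜ (b ⊗ₜ c)) = b ⊗ₜ (a ⊗ₜ c) := by
  simp [swapMap]

lemma cyc_mem (a b c : V) :
    a ⊗ₜ[ZMod 2] (b ⊗ₜ[ZMod 2] c) - b ⊗ₜ[ZMod 2] (c ⊗ₜ[ZMod 2] a) ∈ cycRel V :=
  Submodule.subset_span ⟨a, b, c, rfl⟩

lemma swap_mem (a b c : V) :
    a ⊗ₜ[ZMod 2] (b ⊗ₜ[ZMod 2] c) - b ⊗ₜ[ZMod 2] (a ⊗ₜ[ZMod 2] c) ∈ symRel V :=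
  Submodule.mem_sup_right (Submodule.subset_span ⟨a, b, c, rfl⟩)

lemma mkS_swap_tmul (a b c : V) :
    mkS V (a ⊗ₜ (b ⊗ₜ c)) = mkS V (b ⊗ₜ (a ⊗ₜ c)) := by
  rw [← sub_eq_zero, ← map_sub]
  exact (Submodule.Quotient.mk_eq_zero _).2 (swap_mem V a b c)

/-- The lifted map `t : T³(V) → S'³(V)`, `x ↦ mkS' x + mkS' (swap x)`. -/
noncomputable def tMap : T3 V →ₗ[ZMod 2] S3' V :=
  mkS' V + (mkS' V).comp (swapMap V)

lemma tMap_tmul (a b c : V) :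
    tMap V (a ⊗ₜ (b ⊗ₜ c)) = mkS' V (a ⊗ₜ (b ⊗ₜ c)) + mkS' V (b ⊗ₜ (a ⊗ₜ c)) := by
  simp [tMap]

lemma symRel_le_ker_tMap : symRel V ≤ LinearMap.ker (tMap V) := by
  apply sup_le
  · unfold cycRel; rw [Submodule.span_le]
    rintro x ⟨a, b, c, rfl⟩
    have h1 : mkS' V (a ⊗ₜ (b ⊗ₜ c) - b ⊗ₜ (c ⊗ₜ a)) = 0 :=
      (Submodule.Quotient.mk_eq_zero _).2 (cyc_mem V a b c)
    have h2 : b ⊗ₜ[ZMod 2] (a ⊗ₜ[ZMod 2] c) - c ⊗ₜ[ZMod 2] (b ⊗ₜ[ZMod 2] a) ∈ cycRel V := by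
      have := (cycRel V).add_mem (cyc_mem V b a c) (cyc_mem V a c b)
      rwa [sub_add_sub_cancel] at this
    have h2' : mkS' V (b ⊗ₜ (a ⊗ₜ c) - c ⊗ₜ (b ⊗ₜ a)) = 0 :=
      (Submodule.Quotient.mk_eq_zero _).2 h2
    change tMap V _ = 0
    simp only [SetLike.mem_coe, LinearMap.mem_ker, tMap, LinearMap.add_apply,
      LinearMap.comp_apply, map_sub, swapMap_tmul] at *
    rw [sub_eq_zero] at h1 h2'
    rw [h1, h2']
    abel
  · rw [Submodule.span_le]
    rintro x ⟨a, b, c, rfl⟩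
    simp only [SetLike.mem_coe, LinearMap.mem_ker, tMap, LinearMap.add_apply,
      LinearMap.comp_apply, map_sub, swapMap_tmul]
    abel

end Aux

/-- Lemma 1.1: there are well-defined linear maps
`τ : S³(V) → S'³(V)`, `A∙B∙C ↦ A⊙B⊙C + B⊙A⊙C`, and `ρ : S'³(V) → S³(V)`,
`A⊙B⊙C ↦ A∙B∙C`, with `ρ` surjective and `ker ρ = im τ`; i.e. the sequence
`S³(V) → S'³(V) → S³(V) → 0` is exact. -/
theorem S3_S3'_exact_sequence (V : Type*) [AddCommGroup V] [Module (ZMod 2) V] :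
    ∃ (τ : S3 V →ₗ[ZMod 2] S3' V) (ρ : S3' V →ₗ[ZMod 2] S3 V),
      (∀ a b c : V, τ (mkS V (a ⊗ₜ (b ⊗ₜ c))) =
          mkS' V (a ⊗ₜ (b ⊗ₜ c)) + mkS' V (b ⊗ₜ (a ⊗ₜ c))) ∧
      (∀ a b c : V, ρ (mkS' V (a ⊗ₜ (b ⊗ₜ c))) = mkS V (a ⊗ₜ (b ⊗ₜ c))) ∧
      Function.Surjective ρ ∧
      LinearMap.ker ρ = LinearMap.range τ := by

  set τ : S3 V →ₗ[ZMod 2] S3' V := (symRel V).liftQ (tMap V) (symRel_le_ker_tMap V) with hτ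
  have hcyc_le : cycRel V ≤ LinearMap.ker (mkS V) := by
    rw [mkS, Submodule.ker_mkQ]; exact le_sup_left
  set ρ : S3' V →ₗ[ZMod 2] S3 V := (cycRel V).liftQ (mkS V) hcyc_le with hρ
  have hτ_app : ∀ x : T3 V, τ (mkS V x) = tMap V x := fun x => rfl
  have hρ_app : ∀ x : T3 V, ρ (mkS' V x) = mkS V x := fun x => rfl
  refine ⟨τ, ρ, ?_, ?_, ?_, ?_⟩
  · intro a b c
    rw [hτ_app, tMap_tmul]
  · intro a b c
    rw [hρ_app]
  · intro y
    obtain ⟨x, rfl⟩ := (symRel V).mkQ_surjective y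
    exact ⟨mkS' V x, hρ_app x⟩
  · -- ker ρ = range τ
    have mkS_swap : ∀ z : T3 V, mkS V (swapMap V z) = mkS V z := by
      have : (mkS V).comp (swapMap V) = mkS V := by
        apply TensorProduct.ext
        apply LinearMap.ext; intro a
        apply TensorProduct.ext'
        intro b c
        simpa using (mkS_swap_tmul V a b c).symm
      intro z
      exact LinearMap.congr_fun this z
    apply le_antisymm
    · -- ker ρ ≤ range τ
      intro y hy
      obtain ⟨x, rfl⟩ := (cycRel V).mkQ_surjective y
      have hx : x ∈ symRel V := by
        rw [LinearMap.mem_ker] at hy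
        have : mkS V x = 0 := hy
        exact (Submodule.Quotient.mk_eq_zero _).1 this
      -- show mkS' x ∈ range τ for all x ∈ symRel
      have key : symRel V ≤ Submodule.comap ((cycRel V).mkQ) (LinearMap.range τ) := by
        apply sup_le
        · intro z hz
          simp only [Submodule.mem_comap]
          have : (cycRel V).mkQ z = 0 := (Submodule.Quotient.mk_eq_zero _).2 hz
          rw [this]
          exact zero_mem _
        · rw [Submodule.span_le]
          rintro z ⟨a, b, c, rfl⟩
          simp only [SetLike.mem_coe, Submodule.mem_comap]
          refine ⟨mkS V (a ⊗ₜ (b ⊗ₜ c)), ?_⟩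
          rw [hτ_app, tMap_tmul]
          show _ = mkS' V _
          rw [map_sub, sub_eq_add_neg, char2_neg]
      exact key hx
    · -- range τ ≤ ker ρ
      rintro y ⟨x, rfl⟩
      obtain ⟨z, rfl⟩ := (symRel V).mkQ_surjective x
      rw [LinearMap.mem_ker]
      have : τ ((symRel V).mkQ z) = tMap V z := rfl
      rw [this]
      have : ρ (tMap V z) = mkS V z + mkS V (swapMap V z) := by
        simp only [tMap, LinearMap.add_apply, LinearMap.comp_apply]
        rw [map_add, hρ_app, hρ_app]
      rw [this, mkS_swap, char2_add_self]
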